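/- limsup_{n→∞} g_n^{1/n} = 4/(−2 − √2 + √(14 + 4√2)), i.e., the exponential growth rate of (g_n) equals the reciprocal of the smallest positive singularity of its generating function. -/

import Mathlib

open Filter Real Finset Topology

noncomputable def x₀ : ℝ := (Real.sqrt (14 + 4*Real.sqrt 2) - 2 - Real.sqrt 2)/4

lemma s2_sq : Real.sqrt 2 ^ 2 = 2 := Real.sq_sqrt (by norm_num)
lemma s2_lb : 1.414 ≤ Real.sqrt 2 := by
  nlinarith [s2_sq, Real.sqrt_nonneg 2]
lemma s2_ub : Real.sqrt 2 ≤ 1.41422 := by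
  nlinarith [s2_sq, Real.sqrt_nonneg 2]

lemma x0_quad : 2*x₀^2 + (2+Real.sqrt 2)*x₀ = 1 := by
  have hs : Real.sqrt (14+4*Real.sqrt 2) ^ 2 = 14 + 4*Real.sqrt 2 :=
    Real.sq_sqrt (by positivity)
  unfold x₀
  have h2 := s2_sq
  ring_nf
  ring_nf at hs
  nlinarith [hs, h2]

lemma x0_pos : 0 < x₀ := by
  have hs : Real.sqrt (14+4*Real.sqrt 2) ^ 2 = 14 + 4*Real.sqrt 2 :=
    Real.sq_sqrt (by positivity)
  have h1 : (2 + Real.sqrt 2)^2 < Real.sqrt (14+4*Real.sqrt 2)^2 := by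
    nlinarith [s2_sq]
  have h2 : 2 + Real.sqrt 2 < Real.sqrt (14+4*Real.sqrt 2) := by
    nlinarith [Real.sqrt_nonneg (14+4*Real.sqrt 2), Real.sqrt_nonneg 2, h1]
  unfold x₀; linarith

lemma x0_gt : 1/4 < x₀ := by
  nlinarith [x0_quad, x0_pos, s2_ub]

lemma x0_lt : x₀ < 0.255 := by
  nlinarith [x0_quad, x0_pos, s2_lb]


section G
variable {g : ℕ → ℤ}
  (hg0 : g 0 = 1) (hg1 : g 1 = 1)
  (hrec : ∀ n, 2 ≤ n → g n = (∑ i ∈ Finset.range n, g i * g (n-1-i))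
      - (if Odd n then 2^((n-3)/2) else 0))

include hg0 hg1 hrec

lemma g_ge : ∀ n, 1 ≤ n → (2:ℤ)^(n-1) ≤ g n := by
  intro n
  induction n using Nat.strong_induction_on with
  | _ n IH =>
    intro hn
    match n, hn with
    | 1, _ => simpa using hg1.ge
    | 2, _ =>
      rw [hrec 2 le_rfl]
      norm_num [Finset.sum_range_succ, hg0, hg1, Nat.odd_iff]
    | (m+3), _ =>
      set n := m + 3 with hnd
      have hge1 : ∀ i, i < n → (1:ℤ) ≤ g i := by
        intro i hi
        rcases Nat.eq_zero_or_pos i with h0 | h1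
        · simp [h0, hg0]
        · calc (1:ℤ) ≤ 2^(i-1) := one_le_pow₀ (by norm_num)
            _ ≤ g i := IH i hi h1
      have hnn : ∀ i ∈ Finset.range n, i ∉ ({0, 1, n-1} : Finset ℕ) → (0:ℤ) ≤ g i * g (n-1-i) := by
        intro i hi _
        have hi' := Finset.mem_range.mp hi
        exact mul_nonneg (le_trans zero_le_one (hge1 i hi'))
          (le_trans zero_le_one (hge1 _ (by omega)))
      have hsub : ({0, 1, n-1} : Finset ℕ) ⊆ Finset.range n := by
        intro i hi
        simp only [Finset.mem_insert, Finset.mem_singleton] at hi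
        rcases hi with h|h|h <;> simp [h] <;> omega
      have hsum : ∑ i ∈ ({0, 1, n-1} : Finset ℕ), g i * g (n-1-i)
          ≤ ∑ i ∈ Finset.range n, g i * g (n-1-i) :=
        Finset.sum_le_sum_of_subset_of_nonneg hsub hnn
      have hset : ∑ i ∈ ({0, 1, n-1} : Finset ℕ), g i * g (n-1-i)
          = g 0 * g (n-1) + g 1 * g (n-2) + g (n-1) * g 0 := by
        rw [Finset.sum_insert (by simp only [Finset.mem_insert, Finset.mem_singleton]; push_neg; omega),
          Finset.sum_insert (by simp only [Finset.mem_singleton]; omega),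
          Finset.sum_singleton]
        have e1 : n - 1 - 0 = n - 1 := by omega
        have e2 : n - 1 - 1 = n - 2 := by omega
        have e3 : n - 1 - (n-1) = 0 := by omega
        rw [e1, e2, e3]; ring
    -- bounds
      have hb1 : (2:ℤ)^(n-2) ≤ g (n-1) := by
        have := IH (n-1) (by omega) (by omega)
        have : (2:ℤ)^(n-1-1) ≤ g (n-1) := this
        have e : n - 1 - 1 = n - 2 := by omega
        rwa [e] at this
      have hb2 : (2:ℤ)^(n-3) ≤ g (n-2) := by
        have := IH (n-2) (by omega) (by omega)
        have e : n - 2 - 1 = n - 3 := by omega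
        rwa [e] at this
      have hcorr : (if Odd n then (2:ℤ)^((n-3)/2) else 0) ≤ 2^(n-3) := by
        split
        · exact pow_le_pow_right₀ (by norm_num) (by omega)
        · positivity
      rw [hrec n (by omega)]
      have key : (2:ℤ)^(n-2) + 2^(n-3) + 2^(n-2) - 2^(n-3) ≤
          (∑ i ∈ Finset.range n, g i * g (n-1-i)) - (if Odd n then (2:ℤ)^((n-3)/2) else 0) := by
        have h0 : g 0 * g (n-1) = g (n-1) := by rw [hg0]; ring
        have h1 : g 1 * g (n-2) = g (n-2) := by rw [hg1]; ring
        have h2 : g (n-1) * g 0 = g (n-1) := by rw [hg0]; ring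
        rw [hset, h0, h1, h2] at hsum
        linarith
      calc (2:ℤ)^(n-1) = 2^(n-2) + 2^(n-3) + 2^(n-2) - 2^(n-3) := by
            have e : n - 1 = (n-2) + 1 := by omega
            rw [e, pow_succ]; ring
        _ ≤ _ := key

lemma g_nonneg : ∀ n, (0:ℤ) ≤ g n := by
  intro n
  rcases Nat.eq_zero_or_pos n with h|h
  · simp [h, hg0]
  · exact le_trans (by positivity) (g_ge hg0 hg1 hrec n h)

lemma g_ge_one : ∀ n, (1:ℤ) ≤ g n := by
  intro n
  rcases Nat.eq_zero_or_pos n with h|h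
  · simp [h, hg0]
  · exact le_trans (one_le_pow₀ (by norm_num)) (g_ge hg0 hg1 hrec n h)

end G

noncomputable def A (g : ℕ → ℤ) (x : ℝ) (n : ℕ) : ℝ := (g n : ℝ) * x^n
noncomputable def S (g : ℕ → ℤ) (x : ℝ) (N : ℕ) : ℝ := ∑ n ∈ Finset.range (N+1), A g x n
noncomputable def CC (g : ℕ → ℤ) (x : ℝ) (N : ℕ) : ℝ :=
  ∑ p ∈ (Finset.range N).biUnion Finset.HasAntidiagonal.antidiagonal, A g x p.1 * A g x p.2
noncomputable def Tt (x : ℝ) (n : ℕ) : ℝ := if Odd n ∧ 3 ≤ n then 2^((n-3)/2) * x^n else 0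
noncomputable def TT (x : ℝ) (N : ℕ) : ℝ := ∑ n ∈ Finset.range (N+1), Tt x n
noncomputable def Tinf (x : ℝ) : ℝ := x^3/(1-2*x^2)

section G
variable {g : ℕ → ℤ}
  (hg0 : g 0 = 1) (hg1 : g 1 = 1)
  (hrec : ∀ n, 2 ≤ n → g n = (∑ i ∈ Finset.range n, g i * g (n-1-i))
      - (if Odd n then 2^((n-3)/2) else 0))

include hg0 hg1 hrec

lemma master (x : ℝ) : ∀ N, S g x N = 1 + x * CC g x N - TT x N := by
  intro N
  induction N with
  | zero =>
    simp [S, A, CC, TT, Tt, hg0]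
  | succ N IH =>
    have hstepA : A g x (N+1)
        = x * (∑ p ∈ Finset.HasAntidiagonal.antidiagonal N, A g x p.1 * A g x p.2) - Tt x (N+1) := by
      have hanti : (∑ p ∈ Finset.HasAntidiagonal.antidiagonal N, A g x p.1 * A g x p.2)
          = ∑ i ∈ Finset.range (N+1), A g x i * A g x (N-i) :=
        Finset.Nat.sum_antidiagonal_eq_sum_range_succ (fun i j => A g x i * A g x j) N
      have hsum : x * ∑ i ∈ Finset.range (N+1), A g x i * A g x (N - i)
          = ∑ i ∈ Finset.range (N+1), ((g i : ℝ) * (g (N-i) : ℝ)) * x^(N+1) := by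
        rw [Finset.mul_sum]
        refine Finset.sum_congr rfl ?_
        intro i hi
        have hi' : i ≤ N := Nat.lt_succ_iff.mp (Finset.mem_range.mp hi)
        have hxx : x^i * x^(N-i) = x^N := by
          rw [← pow_add]; congr 1; omega
        unfold A
        calc x * ((g i : ℝ) * x^i * ((g (N-i) : ℝ) * x^(N-i)))
            = (g i : ℝ) * (g (N-i) : ℝ) * (x^i * x^(N-i)) * x := by ring
          _ = ((g i : ℝ) * (g (N-i) : ℝ)) * x^(N+1) := by rw [hxx]; ring
      rcases Nat.eq_zero_or_pos N with h0 | h1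
      · subst h0
        simp [A, Tt, hg0, hg1]
      · have h2 : 2 ≤ N+1 := by omega
        have hc : ((g (N+1) : ℤ) : ℝ)
            = (∑ i ∈ Finset.range (N+1), ((g i : ℝ) * (g (N-i) : ℝ)))
              - (if Odd (N+1) then (2:ℝ)^((N+1-3)/2) else 0) := by
          rw [hrec (N+1) h2]
          push_cast
          rfl
        have hTt : (if Odd (N+1) then (2:ℝ)^((N+1-3)/2) else 0) * x^(N+1) = Tt x (N+1) := by
          unfold Tt
          by_cases ho : Odd (N+1)
          · have h3 : 3 ≤ N+1 := by rcases ho with ⟨k, hk⟩; omega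
            simp [ho, h3]
          · simp [ho]
        rw [hanti, hsum]
        unfold A
        rw [hc, sub_mul, Finset.sum_mul, hTt]
    have hCC : CC g x (N+1) = CC g x N + ∑ p ∈ Finset.HasAntidiagonal.antidiagonal N, A g x p.1 * A g x p.2 := by
      unfold CC
      rw [Finset.range_add_one, Finset.biUnion_insert]
      rw [Finset.sum_union]
      · ring
      · rw [Finset.disjoint_left]
        intro p hp hp2
        rw [Finset.mem_biUnion] at hp2
        obtain ⟨m, hm, hpm⟩ := hp2
        rw [Finset.HasAntidiagonal.mem_antidiagonal] at hp hpm
        rw [Finset.mem_range] at hm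
        omega
    have hS : S g x (N+1) = S g x N + A g x (N+1) := by
      unfold S; rw [Finset.sum_range_succ]
    have hT : TT x (N+1) = TT x N + Tt x (N+1) := by
      unfold TT; rw [Finset.sum_range_succ]
    rw [hS, IH, hstepA, hCC, hT]; ring

end G

section CCbounds
variable {g : ℕ → ℤ} {x : ℝ}

lemma A_nonneg (hg : ∀ n, (0:ℤ) ≤ g n) (hx : 0 ≤ x) (n : ℕ) : 0 ≤ A g x n := by
  unfold A
  have : (0:ℝ) ≤ (g n : ℝ) := by exact_mod_cast hg n
  positivity

lemma S_sq (N : ℕ) : (S g x N)^2 = ∑ p ∈ (Finset.range (N+1)) ×ˢ (Finset.range (N+1)),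
    A g x p.1 * A g x p.2 := by
  rw [Finset.sum_product]
  unfold S
  rw [pow_two, Finset.sum_mul_sum]

lemma CC_le (hg : ∀ n, (0:ℤ) ≤ g n) (hx : 0 ≤ x) (N : ℕ) :
    CC g x (N+1) ≤ (S g x N)^2 := by
  rw [S_sq]
  apply Finset.sum_le_sum_of_subset_of_nonneg
  · intro p hp
    rw [Finset.mem_biUnion] at hp
    obtain ⟨m, hm, hpm⟩ := hp
    rw [Finset.mem_range] at hm
    rw [Finset.HasAntidiagonal.mem_antidiagonal] at hpm
    rw [Finset.mem_product, Finset.mem_range, Finset.mem_range]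
    omega
  · intro p _ _
    exact mul_nonneg (A_nonneg hg hx _) (A_nonneg hg hx _)

lemma CC_ge (hg : ∀ n, (0:ℤ) ≤ g n) (hx : 0 ≤ x) (M : ℕ) :
    (S g x M)^2 ≤ CC g x (2*M+2) := by
  rw [S_sq]
  apply Finset.sum_le_sum_of_subset_of_nonneg
  · intro p hp
    rw [Finset.mem_product, Finset.mem_range, Finset.mem_range] at hp
    rw [Finset.mem_biUnion]
    exact ⟨p.1 + p.2, Finset.mem_range.mpr (by omega), Finset.HasAntidiagonal.mem_antidiagonal.mpr rfl⟩
  · intro p _ _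
    exact mul_nonneg (A_nonneg hg hx _) (A_nonneg hg hx _)

lemma Tt_nonneg (hx : 0 ≤ x) (n : ℕ) : 0 ≤ Tt x n := by
  unfold Tt; split
  · positivity
  · exact le_rfl

lemma TT_mono (hx : 0 ≤ x) : Monotone (TT x) := by
  intro N N' h
  unfold TT
  apply Finset.sum_le_sum_of_subset_of_nonneg
  · exact Finset.range_subset_range.mpr (by omega)
  · intro n _ _; exact Tt_nonneg hx n

lemma TT_closed (hx2 : 2*x^2 < 1) :
    ∀ K, TT x (2*K+1) = Tinf x - x^3*(2*x^2)^K/(1-2*x^2) := by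
  have hne : 1 - 2*x^2 ≠ 0 := by nlinarith
  intro K
  induction K with
  | zero =>
    unfold TT Tinf
    rw [show 2*0+1+1 = 2 by norm_num, Finset.sum_range_succ, Finset.sum_range_one]
    unfold Tt
    norm_num
  | succ K IH =>
    have e : 2*(K+1)+1+1 = (2*K+1+1) + 1 + 1 := by ring
    unfold TT at IH ⊢
    rw [e, Finset.sum_range_succ, Finset.sum_range_succ, IH]
    have h2 : Tt x (2*K+1+1) = 0 := by
      unfold Tt
      have : ¬ Odd (2*K+1+1) := by simp [Nat.odd_iff]; omega
      simp [this]
    have h3 : Tt x (2*K+1+1+1) = 2^K * x^(2*K+3) := by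
      unfold Tt
      have ho : Odd (2*K+1+1+1) := ⟨K+1, by ring⟩
      have h3' : 3 ≤ 2*K+1+1+1 := by omega
      have he : (2*K+1+1+1-3)/2 = K := by omega
      simp only [ho, h3', and_self, if_true, he]
    rw [h2, h3]
    unfold Tinf
    have hpow : (2*x^2)^(K+1) = 2*x^2*(2*x^2)^K := by ring
    have hpow2 : (2:ℝ)^K * x^(2*K+3) = x^3 * (2*x^2)^K := by
      rw [mul_pow, ← pow_mul]; ring
    rw [hpow, hpow2]
    set t := 1 - 2*x^2 with ht
    field_simp
    ring

lemma TT_le_Tinf (hx : 0 ≤ x) (hx2 : 2*x^2 < 1) (N : ℕ) : TT x N ≤ Tinf x := by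
  have h1 : TT x N ≤ TT x (2*N+1) := TT_mono hx (by omega)
  rw [TT_closed hx2 N] at h1
  have : 0 ≤ x^3*(2*x^2)^N/(1-2*x^2) := by
    have : (0:ℝ) < 1 - 2*x^2 := by nlinarith
    positivity
  linarith

lemma Tinf_sub_TT (hx : 0 ≤ x) (hx2 : 2*x^2 < 1) (N : ℕ) (hN : 1 ≤ N) :
    Tinf x - TT x N ≤ (x/(2*(1-2*x^2))) * (Real.sqrt 2 * x)^N := by
  set K := (N-1)/2 with hK
  have h1 : TT x (2*K+1) ≤ TT x N := TT_mono hx (by omega)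
  have hden : (0:ℝ) < 1 - 2*x^2 := by nlinarith
  have heta : (Real.sqrt 2 * x)^2 = 2*x^2 := by
    rw [mul_pow, Real.sq_sqrt (by norm_num : (0:ℝ) ≤ 2)]
  have heta1 : 0 ≤ Real.sqrt 2 * x := by positivity
  have heta2 : Real.sqrt 2 * x ≤ 1 := by nlinarith [heta]
  have hKN : N ≤ 2*K+2 := by omega
  have hp : (Real.sqrt 2 * x)^(2*K+2) ≤ (Real.sqrt 2 * x)^N :=
    pow_le_pow_of_le_one heta1 heta2 hKN
  have hid : x^3*(2*x^2)^K = (x/2) * (Real.sqrt 2 * x)^(2*K+2) := by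
    rw [show (2*K+2) = 2*(K+1) by ring, pow_mul, heta]
    ring
  calc Tinf x - TT x N ≤ Tinf x - TT x (2*K+1) := by linarith
    _ = x^3*(2*x^2)^K/(1-2*x^2) := by rw [TT_closed hx2 K]; ring
    _ = (x/2) * (Real.sqrt 2 * x)^(2*K+2) / (1-2*x^2) := by rw [hid]
    _ ≤ (x/2) * (Real.sqrt 2 * x)^N / (1-2*x^2) := by
        exact div_le_div_of_nonneg_right (mul_le_mul_of_nonneg_left hp (by positivity)) hden.le
    _ = (x/(2*(1-2*x^2))) * (Real.sqrt 2 * x)^N := by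
        rw [div_mul_eq_mul_div, div_mul_eq_mul_div, div_div]
end CCbounds

noncomputable def DD (x : ℝ) : ℝ := 1 - 4*x + 4*x^4/(1-2*x^2)
noncomputable def MM (x : ℝ) : ℝ := (1 - Real.sqrt (DD x))/(2*x)

section Dfacts
variable {x : ℝ}

lemma zeta_lt (hxu : x ≤ 0.255) (hx0 : 0 < x) : 2*x^2 < 1 := by nlinarith

lemma DD_nonneg (hx0 : 0 < x) (hxle : x ≤ x₀) : 0 ≤ DD x := by
  have hxu : x ≤ 0.255 := le_trans hxle x0_lt.le
  have hden : (0:ℝ) < 1 - 2*x^2 := by nlinarith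
  have hq0 : 2*x₀^2 + (2+Real.sqrt 2)*x₀ - 1 = 0 := by linarith [x0_quad]
  have hs2 : (0:ℝ) ≤ Real.sqrt 2 := Real.sqrt_nonneg 2
  have hqp : 2*x^2 + (2+Real.sqrt 2)*x - 1 ≤ 0 := by nlinarith [x0_pos]
  have hqm : 2*x^2 + (2-Real.sqrt 2)*x - 1 ≤ 0 := by nlinarith
  have hP : 0 ≤ (2*x^2 + (2+Real.sqrt 2)*x - 1) * (2*x^2 + (2-Real.sqrt 2)*x - 1) := by
    have := mul_nonneg (neg_nonneg.mpr hqp) (neg_nonneg.mpr hqm)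
    rwa [neg_mul_neg] at this
  have hid : DD x * (1-2*x^2)
      = (2*x^2 + (2+Real.sqrt 2)*x - 1) * (2*x^2 + (2-Real.sqrt 2)*x - 1) := by
    unfold DD
    rw [add_mul, div_mul_cancel₀ _ hden.ne']
    nlinarith [s2_sq]
  nlinarith [hid, hP, hden]

lemma DD_le (hx : 1/4 ≤ x) (hxu : x ≤ 0.255) : DD x ≤ 1/49 := by
  have hden : (0:ℝ) < 1 - 2*x^2 := by nlinarith
  have hDDeq : DD x = ((1-4*x)*(1-2*x^2)+4*x^4)/(1-2*x^2) := by
    unfold DD; rw [eq_div_iff hden.ne', add_mul, div_mul_cancel₀ _ hden.ne']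
    try ring
  rw [hDDeq, div_le_iff₀ hden]
  nlinarith [sq_nonneg (x - 1/4), sq_nonneg (x - 0.255), mul_nonneg (sub_nonneg.mpr hx) (sub_nonneg.mpr hxu)]

lemma sqrtDD_le (hx : 1/4 ≤ x) (hxu : x ≤ 0.255) : Real.sqrt (DD x) ≤ 1/7 := by
  have h := Real.sqrt_le_sqrt (DD_le hx hxu)
  rwa [show (1/49:ℝ) = (1/7)^2 by norm_num, Real.sqrt_sq (by norm_num : (0:ℝ) ≤ 1/7)] at h

lemma MM_ge (hx : 1/4 ≤ x) (hxu : x ≤ 0.255) : 1.68 ≤ MM x := by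
  have hx0 : (0:ℝ) < 2*x := by linarith
  rw [MM, le_div_iff₀ hx0]
  nlinarith [sqrtDD_le hx hxu]

lemma MM_le (hx : 1/4 ≤ x) (hx0 : 0 < x) (hxle : x ≤ x₀) : MM x ≤ 2 := by
  have h2x : (0:ℝ) < 2*x := by linarith
  rw [MM, div_le_iff₀ h2x]
  have := Real.sqrt_nonneg (DD x)
  nlinarith

lemma MM_fixed (hx0 : 0 < x) (hxle : x ≤ x₀) : 1 + x*(MM x)^2 - Tinf x = MM x := by
  have hxu : x ≤ 0.255 := le_trans hxle x0_lt.le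
  have hden : (0:ℝ) < 1 - 2*x^2 := by nlinarith
  have hs : Real.sqrt (DD x)^2 = DD x := Real.sq_sqrt (DD_nonneg hx0 hxle)
  have hD : Real.sqrt (DD x)^2 = 1 - 4*x + 4*x^4/(1-2*x^2) := by rw [hs]; rfl
  have hD2 : Real.sqrt (DD x)^2*(1-2*x^2) = (1-4*x)*(1-2*x^2)+4*x^4 := by
    rw [hs]; unfold DD; rw [add_mul, div_mul_cancel₀ _ hden.ne']
    try ring
  rw [MM, Tinf]
  have h' : 1 - x^2*2 ≠ 0 := by nlinarith
  field_simp
  linear_combination hD2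
end Dfacts

section Upper
variable {g : ℕ → ℤ} {x : ℝ}
  (hg0 : g 0 = 1) (hg1 : g 1 = 1)
  (hrec : ∀ n, 2 ≤ n → g n = (∑ i ∈ Finset.range n, g i * g (n-1-i))
      - (if Odd n then 2^((n-3)/2) else 0))

include hg0 hg1 hrec

lemma S_upper (hx : 1/4 ≤ x) (hxlt : x < x₀) :
    ∀ N, 1 ≤ N → S g x N ≤ MM x - (Real.sqrt 2 * x)^N / 2 := by
  have hgnn : ∀ n, (0:ℤ) ≤ g n := g_nonneg hg0 hg1 hrec
  have hxu : x ≤ 0.255 := le_trans hxlt.le x0_lt.le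
  have hx0 : (0:ℝ) < x := by linarith
  have hden : (0:ℝ) < 1 - 2*x^2 := by nlinarith
  have hzeta : 2*x^2 < 1 := by nlinarith
  set η := Real.sqrt 2 * x with hηdef
  have hs2l := s2_lb
  have hs2u := s2_ub
  have hη0 : 0 ≤ η := by positivity
  have hηu : η ≤ 0.3607 := by rw [hηdef]; nlinarith
  have hη1 : η ≤ 1 := by linarith
  have hM1 : 1.68 ≤ MM x := MM_ge hx hxu
  have hM2 : MM x ≤ 2 := MM_le hx hx0 hxlt.le
  have hfix : 1 + x*(MM x)^2 - Tinf x = MM x := MM_fixed hx0 hxlt.le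
  have hβ : x/(2*(1-2*x^2)) ≤ 0.147 := by
    rw [div_le_iff₀ (by linarith)]
    nlinarith
  have hxM : 3/7 ≤ x * MM x := by
    have hMeq : x * MM x = (1 - Real.sqrt (DD x))/2 := by
      rw [MM]; field_simp
    rw [hMeq]
    have := sqrtDD_le hx hxu
    linarith
  intro N hN1
  induction N, hN1 using Nat.le_induction with
  | base =>
    have hS1 : S g x 1 = 1 + x := by
      unfold S
      rw [Finset.sum_range_succ, Finset.sum_range_one]
      unfold A
      rw [hg0, hg1]
      push_cast; ring
    rw [hS1, pow_one]
    linarith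
  | succ N hN IH =>
    have he0 : 0 ≤ η^N := pow_nonneg hη0 N
    have heη : η^N ≤ η := by
      calc η^N ≤ η^1 := pow_le_pow_of_le_one hη0 hη1 hN
        _ = η := pow_one η
    have hSN0 : 0 ≤ S g x N := Finset.sum_nonneg (fun n _ => A_nonneg hgnn hx0.le n)
    have hsq : (S g x N)^2 ≤ (MM x - η^N/2)^2 := by
      apply pow_le_pow_left₀ hSN0 IH
    have hCCle : CC g x (N+1) ≤ (S g x N)^2 := CC_le hgnn hx0.le N
    have hTail : Tinf x - TT x (N+1) ≤ (x/(2*(1-2*x^2))) * η^(N+1) :=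
      Tinf_sub_TT hx0.le hzeta (N+1) (by omega)
    have hTail2 : Tinf x - TT x (N+1) ≤ 0.147 * η^N := by
      have h1 : (x/(2*(1-2*x^2))) * η^(N+1) ≤ 0.147 * η^N := by
        rw [pow_succ]
        have hb0 : 0 ≤ x/(2*(1-2*x^2)) := by positivity
        calc (x/(2*(1-2*x^2))) * (η^N * η) ≤ 0.147 * (η^N * η) := by
              apply mul_le_mul_of_nonneg_right hβ (by positivity)
          _ ≤ 0.147 * η^N := by nlinarith
      linarith
    have hmaster := master hg0 hg1 hrec x (N+1)
    have hstep : S g x (N+1) ≤ 1 + x*(MM x - η^N/2)^2 - Tinf x + 0.147*η^N := by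
      rw [hmaster]
      have hxCC : x * CC g x (N+1) ≤ x * (MM x - η^N/2)^2 :=
        mul_le_mul_of_nonneg_left (le_trans hCCle hsq) hx0.le
      linarith
    have hxe : x*(η^N) ≤ 0.255*0.3607 :=
      mul_le_mul hxu (le_trans heη hηu) he0 (by norm_num)
    have hbr : 0 ≤ x*(MM x) - x*(η^N)/4 - 0.147 - η/2 := by linarith
    have hkey := mul_nonneg he0 hbr
    have hexpand : 1 + x*(MM x - η^N/2)^2 - Tinf x
        = MM x - x*(MM x)*η^N + x*(η^N)^2/4 := by linear_combination hfix
    have hexp : η^(N+1) = η^N * η := pow_succ η N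
    rw [hexp]
    linarith [hkey, hexpand, hstep]

lemma g_le (hx : 1/4 ≤ x) (hxlt : x < x₀) :
    ∀ n, (g n : ℝ) * x^n ≤ 2 := by
  have hgnn : ∀ n, (0:ℤ) ≤ g n := g_nonneg hg0 hg1 hrec
  have hxu : x ≤ 0.255 := le_trans hxlt.le x0_lt.le
  have hx0 : (0:ℝ) < x := by linarith
  intro n
  rcases Nat.eq_zero_or_pos n with h0 | h1
  · subst h0; simp [hg0]
  · have hA : A g x n ≤ S g x n := by
      unfold S
      apply Finset.single_le_sum (f := fun m => A g x m)
        (fun m _ => A_nonneg hgnn hx0.le m)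
      exact Finset.mem_range.mpr (by omega)
    have hS := S_upper hg0 hg1 hrec hx hxlt n h1
    have hM2 : MM x ≤ 2 := MM_le hx hx0 hxlt.le
    have hη : (0:ℝ) ≤ (Real.sqrt 2 * x)^n := by positivity
    have : A g x n ≤ 2 := by linarith
    unfold A at this
    exact this
end Upper

section Lower
variable {g : ℕ → ℤ} {x₁ B : ℝ}
  (hg0 : g 0 = 1) (hg1 : g 1 = 1)
  (hrec : ∀ n, 2 ≤ n → g n = (∑ i ∈ Finset.range n, g i * g (n-1-i))
      - (if Odd n then 2^((n-3)/2) else 0))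

include hg0 hg1 hrec

lemma no_bounded_sums (hx0lt : x₀ < x₁) (hxu : x₁ ≤ 0.26)
    (hB : ∀ N, S g x₁ N ≤ B) : False := by
  have hgnn : ∀ n, (0:ℤ) ≤ g n := g_nonneg hg0 hg1 hrec
  have hx1pos : 0 < x₁ := lt_trans x0_pos hx0lt
  have hzeta : 2*x₁^2 < 1 := by nlinarith
  have hden : (0:ℝ) < 1 - 2*x₁^2 := by linarith
  have hmono : Monotone (S g x₁) := by
    intro N N' h
    unfold S
    apply Finset.sum_le_sum_of_subset_of_nonneg
    · exact Finset.range_subset_range.mpr (by omega)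
    · intro n _ _; exact A_nonneg hgnn hx1pos.le n
  have hbdd : BddAbove (Set.range (S g x₁)) := ⟨B, by rintro _ ⟨N, rfl⟩; exact hB N⟩
  set Ssup := ⨆ N, S g x₁ N with hSsup
  have htend : Tendsto (S g x₁) atTop (𝓝 Ssup) := tendsto_atTop_ciSup hmono hbdd
  have hSle : ∀ M, 1 + x₁*(S g x₁ M)^2 - Tinf x₁ ≤ Ssup := by
    intro M
    have hmaster := master hg0 hg1 hrec x₁ (2*M+2)
    have hCC := CC_ge hgnn hx1pos.le M
    have hTT := TT_le_Tinf hx1pos.le hzeta (2*M+2)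
    have hle : 1 + x₁*(S g x₁ M)^2 - Tinf x₁ ≤ S g x₁ (2*M+2) := by
      rw [hmaster]
      have := mul_le_mul_of_nonneg_left hCC hx1pos.le
      linarith
    exact le_trans hle (le_ciSup hbdd (2*M+2))
  have hlim : Tendsto (fun M => 1 + x₁*(S g x₁ M)^2 - Tinf x₁) atTop
      (𝓝 (1 + x₁*Ssup^2 - Tinf x₁)) := by
    have h2 : Tendsto (fun M => (S g x₁ M)^2) atTop (𝓝 (Ssup^2)) := htend.pow 2
    have h3 : Tendsto (fun M => x₁*(S g x₁ M)^2) atTop (𝓝 (x₁*Ssup^2)) := h2.const_mul x₁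
    have h4 : Tendsto (fun M => 1 + x₁*(S g x₁ M)^2) atTop (𝓝 (1 + x₁*Ssup^2)) :=
      h3.const_add 1
    exact h4.sub_const (Tinf x₁)
  have hfinal : 1 + x₁*Ssup^2 - Tinf x₁ ≤ Ssup :=
    le_of_tendsto hlim (Filter.Eventually.of_forall hSle)
  -- quadratic has no real solution since DD x₁ < 0
  have hs2l := s2_lb
  have hs2u := s2_ub
  have hqp : 0 < 2*x₁^2 + (2+Real.sqrt 2)*x₁ - 1 := by
    nlinarith [x0_quad, x0_pos]
  have hqm : 2*x₁^2 + (2-Real.sqrt 2)*x₁ - 1 < 0 := by nlinarith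
  have hid : DD x₁ * (1-2*x₁^2)
      = (2*x₁^2 + (2+Real.sqrt 2)*x₁ - 1) * (2*x₁^2 + (2-Real.sqrt 2)*x₁ - 1) := by
    unfold DD
    rw [add_mul, div_mul_cancel₀ _ hden.ne']
    nlinarith [s2_sq]
  have hDneg : DD x₁ < 0 := by nlinarith [mul_pos hqp (neg_pos.mpr hqm)]
  have hq : x₁*Ssup^2 - Ssup + (1 - Tinf x₁) = ((2*x₁*Ssup - 1)^2 - DD x₁)/(4*x₁) := by
    unfold Tinf DD
    field_simp
    ring
  have hnum : 0 < (2*x₁*Ssup - 1)^2 - DD x₁ := by nlinarith [sq_nonneg (2*x₁*Ssup - 1)]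
  have hpos : 0 < x₁*Ssup^2 - Ssup + (1 - Tinf x₁) := by
    rw [hq]
    positivity
  linarith
end Lower

theorem binary_hipster_upper_growth_rate
    (g : ℕ → ℤ)
    (ℓ : ℕ → ℤ)
    (hℓ0 : ℓ 0 = 1)
    (hℓ : ∀ k, 1 ≤ k → ℓ k = 2 ^ (k - 1))
    (hg0 : g 0 = 1)
    (hg : ∀ n, 1 ≤ n →
      g n = (∑ i ∈ Finset.range n, g i * g (n - 1 - i))
              - (if Odd n then ℓ ((n - 1) / 2) else 0)
              + (if n = 1 then 1 else 0)) :
    Filter.limsup (fun n : ℕ => ((g n : ℝ)) ^ (1 / (n : ℝ))) Filter.atTop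
      = 4 / (-2 - Real.sqrt 2 + Real.sqrt (14 + 4 * Real.sqrt 2)) := by
  have hg1 : g 1 = 1 := by
    have h := hg 1 le_rfl
    simpa [Finset.sum_range_one, hg0, hℓ0, Nat.odd_iff] using h
  have hrec : ∀ n, 2 ≤ n → g n = (∑ i ∈ Finset.range n, g i * g (n-1-i))
      - (if Odd n then 2^((n-3)/2) else 0) := by
    intro n hn
    have h := hg n (by omega)
    have hne : n ≠ 1 := by omega
    rw [if_neg hne, add_zero] at h
    rw [h]
    congr 1
    by_cases ho : Odd n
    · rw [if_pos ho, if_pos ho]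
      obtain ⟨k, hk⟩ := ho
      have hk1 : 1 ≤ (n-1)/2 := by omega
      rw [hℓ _ hk1]
      congr 1
      omega
    · rw [if_neg ho, if_neg ho]
  have hgnn : ∀ n, (0:ℤ) ≤ g n := g_nonneg hg0 hg1 hrec
  have hcast1 : ∀ n, (1:ℝ) ≤ (g n : ℝ) := by
    intro n; exact_mod_cast g_ge_one hg0 hg1 hrec n
  set u : ℕ → ℝ := fun n : ℕ => ((g n : ℝ)) ^ (1 / (n : ℝ)) with hudef
  have hu0 : u 0 = 1 := by
    rw [hudef]; simp [hg0]
  have hu1 : ∀ n, 1 ≤ u n := by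
    intro n
    rcases Nat.eq_zero_or_pos n with h0 | h1
    · rw [h0, hu0]
    · exact Real.one_le_rpow (hcast1 n) (by positivity)
  have hngen : ∀ n : ℕ, 1 ≤ n → ∀ c : ℝ, 1 ≤ c → (c^n)^(1/(n:ℝ)) = c := by
    intro n hn c hc
    have hn' : ((n:ℕ):ℝ) ≠ 0 := Nat.cast_ne_zero.mpr (by omega)
    rw [← Real.rpow_natCast c n, ← Real.rpow_mul (by linarith), mul_one_div,
      div_self hn', Real.rpow_one]
  have hu8 : ∀ n, u n ≤ 8 := by
    intro n
    rcases Nat.eq_zero_or_pos n with h0 | h1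
    · rw [h0, hu0]; norm_num
    · have hq := g_le hg0 hg1 hrec (x := 1/4) le_rfl x0_gt n
      have h4p : (0:ℝ) < (4:ℝ)^n := by positivity
      have heq4 : ((1:ℝ)/4)^n = ((4:ℝ)^n)⁻¹ := by rw [one_div, inv_pow]
      have hcast : (g n : ℝ) ≤ 2*4^n := by
        rw [heq4] at hq
        have := mul_le_mul_of_nonneg_right hq h4p.le
        rw [mul_assoc, inv_mul_cancel₀ h4p.ne', mul_one] at this
        linarith
      have hle1 : u n ≤ (2*4^n)^(1/(n:ℝ)) := by
        rw [hudef]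
        exact Real.rpow_le_rpow (by linarith [hcast1 n]) hcast (by positivity)
      have hsplit : ((2:ℝ)*4^n)^(1/(n:ℝ)) = 2^(1/(n:ℝ)) * ((4:ℝ)^n)^(1/(n:ℝ)) :=
        Real.mul_rpow (by norm_num) (by positivity)
      have h4n : ((4:ℝ)^n)^(1/(n:ℝ)) = 4 := hngen n h1 4 (by norm_num)
      have h2n : (2:ℝ)^(1/(n:ℝ)) ≤ 2 := by
        have := Real.rpow_le_rpow_of_exponent_le (by norm_num : (1:ℝ) ≤ 2)
          (by
            rw [div_le_one (by exact_mod_cast h1)]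
            exact_mod_cast Nat.one_le_cast.mpr h1 : (1:ℝ)/(n:ℝ) ≤ 1)
        rwa [Real.rpow_one] at this
      have h2n0 : (0:ℝ) ≤ (2:ℝ)^(1/(n:ℝ)) := by positivity
      calc u n ≤ (2*4^n)^(1/(n:ℝ)) := hle1
        _ = 2^(1/(n:ℝ)) * 4 := by rw [hsplit, h4n]
        _ ≤ 2 * 4 := by nlinarith
        _ = 8 := by norm_num
  have hbdd : Filter.IsBoundedUnder (· ≤ ·) Filter.atTop u :=
    Filter.isBoundedUnder_of ⟨8, hu8⟩
  have hcob : Filter.IsCoboundedUnder (· ≤ ·) Filter.atTop u :=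
    Filter.IsBoundedUnder.isCoboundedUnder_le (Filter.isBoundedUnder_of ⟨1, fun n => hu1 n⟩)
  -- upper bound on limsup
  have hA : ∀ x : ℝ, 1/4 ≤ x → x < x₀ → Filter.limsup u Filter.atTop ≤ 1/x := by
    intro x hx hxlt
    have hx0 : (0:ℝ) < x := by linarith
    have hglex := g_le hg0 hg1 hrec hx hxlt
    have hev : ∀ᶠ n in Filter.atTop, u n ≤ (2:ℝ)^(1/(n:ℝ)) * (1/x) := by
      rw [Filter.eventually_atTop]
      refine ⟨1, fun n hn => ?_⟩
      have hxp : (0:ℝ) < x^n := by positivity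
      have hgle : (g n : ℝ) ≤ 2*(1/x)^n := by
        have h1 : (g n : ℝ) ≤ 2/x^n := by
          rw [le_div_iff₀ hxp]; exact hglex n
        have heq : 2*((1:ℝ)/x)^n = 2/x^n := by
          rw [one_div, inv_pow]; ring
        linarith
      have hx1n : (1:ℝ) ≤ 1/x := by
        rw [le_div_iff₀ hx0]
        have : x ≤ 0.255 := le_trans hxlt.le x0_lt.le
        linarith
      calc u n ≤ (2*(1/x)^n)^(1/(n:ℝ)) := by
            rw [hudef]
            exact Real.rpow_le_rpow (by linarith [hcast1 n]) hgle (by positivity)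
        _ = 2^(1/(n:ℝ)) * ((1/x)^n)^(1/(n:ℝ)) :=
            Real.mul_rpow (by norm_num) (by positivity)
        _ = 2^(1/(n:ℝ)) * (1/x) := by rw [hngen n hn (1/x) hx1n]
    have ht2 : Filter.Tendsto (fun n : ℕ => (2:ℝ)^(1/(n:ℝ))) Filter.atTop (nhds 1) := by
      have h0 : Filter.Tendsto (fun n:ℕ => 1/(n:ℝ)) Filter.atTop (nhds 0) :=
        tendsto_one_div_atTop_nhds_zero_nat
      have hc : ContinuousAt (fun y:ℝ => (2:ℝ)^y) 0 :=
        Real.continuousAt_const_rpow (by norm_num)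
      have := hc.tendsto.comp h0
      rwa [Real.rpow_zero] at this
    have htv : Filter.Tendsto (fun n : ℕ => (2:ℝ)^(1/(n:ℝ)) * (1/x)) Filter.atTop
        (nhds (1*(1/x))) := ht2.mul_const (1/x)
    have hlimv := htv.limsup_eq
    have hfin := Filter.limsup_le_limsup hev hcob htv.isBoundedUnder_le
    rw [hlimv] at hfin
    linarith
  have hle : Filter.limsup u Filter.atTop ≤ 1/x₀ := by
    by_contra hcon
    push_neg at hcon
    have h4 : Filter.limsup u Filter.atTop ≤ 4 := by
      have := hA (1/4) le_rfl x0_gt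
      norm_num at this
      exact this
    obtain ⟨y, hy1, hy2⟩ := exists_between hcon
    have hx0inv : 0 < 1/x₀ := one_div_pos.mpr x0_pos
    have hy0 : 0 < y := lt_trans hx0inv hy1
    have hyx : 1/y < x₀ := by
      have := one_div_lt_one_div_of_lt hx0inv hy1
      rwa [one_div_one_div] at this
    have hy4 : y < 4 := lt_of_lt_of_le hy2 h4
    have hyq : (1:ℝ)/4 ≤ 1/y := one_div_le_one_div_of_le hy0 hy4.le
    have := hA (1/y) hyq hyx
    rw [one_div_one_div] at this
    linarith
  have hge : 1/x₀ ≤ Filter.limsup u Filter.atTop := by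
    by_contra hcon
    push_neg at hcon
    have hL1 : 1 ≤ Filter.limsup u Filter.atTop :=
      Filter.le_limsup_of_frequently_le (Filter.Frequently.of_forall hu1) hbdd
    set L := Filter.limsup u Filter.atTop with hLdef
    set ρ := (L + 1/x₀)/2 with hρdef
    have hx0inv : 0 < 1/x₀ := one_div_pos.mpr x0_pos
    have hLρ : L < ρ := by rw [hρdef]; linarith
    have hρlt : ρ < 1/x₀ := by rw [hρdef]; linarith
    have hρ1 : 1 ≤ ρ := by
      have hx1 : 1 ≤ 1/x₀ := by
        rw [le_div_iff₀ x0_pos]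
        linarith [x0_lt]
      rw [hρdef]; linarith
    have hρ0 : 0 < ρ := by linarith
    have hev := Filter.eventually_lt_of_limsup_lt hLρ hbdd
    obtain ⟨n₀, hn₀⟩ := Filter.eventually_atTop.mp hev
    set m := max n₀ 1 with hmdef
    set x₁ := min ((x₀ + 1/ρ)/2) 0.26 with hx₁def
    have hx₀ρ : x₀ < 1/ρ := by
      have := one_div_lt_one_div_of_lt hρ0 hρlt
      rwa [one_div_one_div] at this
    have hx₁gt : x₀ < x₁ := by
      rw [hx₁def]
      apply lt_min (by linarith) (by linarith [x0_lt])
    have hx₁le : x₁ ≤ 0.26 := min_le_right _ _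
    have hx₁pos : 0 < x₁ := lt_trans x0_pos hx₁gt
    have hρx₁ : ρ*x₁ < 1 := by
      have h1 : x₁ ≤ (x₀+1/ρ)/2 := min_le_left _ _
      have h2 : x₁ < 1/ρ := lt_of_le_of_lt h1 (by linarith)
      calc ρ*x₁ < ρ*(1/ρ) := by exact mul_lt_mul_of_pos_left h2 hρ0
        _ = 1 := mul_one_div_cancel hρ0.ne'
    have hgub : ∀ n, m ≤ n → (g n : ℝ) ≤ ρ^n := by
      intro n hn
      have hun := hn₀ n (le_trans (le_max_left _ _) hn)
      have hn1 : 1 ≤ n := le_trans (le_max_right _ _) hn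
      have hgn : (0:ℝ) ≤ (g n : ℝ) := by linarith [hcast1 n]
      have heq : ((g n : ℝ)^(1/(n:ℝ)))^n = (g n : ℝ) := by
        rw [one_div]
        exact Real.rpow_inv_natCast_pow hgn (by omega)
      have hup : (u n)^n ≤ ρ^n :=
        pow_le_pow_left₀ (by linarith [hu1 n]) hun.le n
      rw [hudef] at hup
      simp only at hup
      rw [heq] at hup
      exact hup
    have hSB : ∀ N, S g x₁ N ≤ (∑ n ∈ Finset.range (m+1), A g x₁ n) + 1/(1-ρ*x₁) := by
      intro N
      have hsplit := Finset.sum_filter_add_sum_filter_not (Finset.range (N+1))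
        (fun n => n ≤ m) (A g x₁)
      have h1 : ∑ n ∈ (Finset.range (N+1)).filter (fun n => n ≤ m), A g x₁ n
          ≤ ∑ n ∈ Finset.range (m+1), A g x₁ n := by
        apply Finset.sum_le_sum_of_subset_of_nonneg
        · intro i hi
          rw [Finset.mem_filter] at hi
          rw [Finset.mem_range]
          omega
        · intro i _ _; exact A_nonneg hgnn hx₁pos.le i
      have h2 : ∑ n ∈ (Finset.range (N+1)).filter (fun n => ¬ n ≤ m), A g x₁ n
          ≤ ∑ n ∈ Finset.range (N+1), (ρ*x₁)^n := by
        calc ∑ n ∈ (Finset.range (N+1)).filter (fun n => ¬ n ≤ m), A g x₁ n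
            ≤ ∑ n ∈ (Finset.range (N+1)).filter (fun n => ¬ n ≤ m), (ρ*x₁)^n := by
              apply Finset.sum_le_sum
              intro i hi
              rw [Finset.mem_filter] at hi
              have hmi : m ≤ i := by omega
              unfold A
              rw [mul_pow]
              exact mul_le_mul_of_nonneg_right (hgub i hmi) (by positivity)
          _ ≤ ∑ n ∈ Finset.range (N+1), (ρ*x₁)^n := by
              apply Finset.sum_le_sum_of_subset_of_nonneg (Finset.filter_subset _ _)
              intro i _ _; positivity
      have h3 : ∑ n ∈ Finset.range (N+1), (ρ*x₁)^n ≤ 1/(1-ρ*x₁) := by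
        have hr0 : (0:ℝ) ≤ ρ*x₁ := by positivity
        have hgm := geom_sum_mul (ρ*x₁) (N+1)
        rw [le_div_iff₀ (by linarith)]
        nlinarith [pow_nonneg hr0 (N+1), hgm]
      have hSdef : S g x₁ N = ∑ n ∈ Finset.range (N+1), A g x₁ n := rfl
      rw [hSdef, ← hsplit]
      linarith
    exact no_bounded_sums hg0 hg1 hrec hx₁gt hx₁le hSB
  have hfinal : Filter.limsup u Filter.atTop = 1/x₀ := le_antisymm hle hge
  rw [hfinal]
  have hden : -2 - Real.sqrt 2 + Real.sqrt (14 + 4*Real.sqrt 2) = 4*x₀ := by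
    rw [x₀]; ring
  rw [hden]
  have hx0ne : x₀ ≠ 0 := ne_of_gt x0_pos
  have h4x0 : (4:ℝ)*x₀ ≠ 0 := mul_ne_zero (by norm_num) hx0ne
  rw [show (4:ℝ)/(4*x₀) = 1/x₀ by
    field_simp]
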